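/- Let φ : Λ → ℤ on a finite Λ ⊂ ℤ², and write φ₊ := max(φ,0), φ₋ := max(−φ,0). Then H_Λ(φ) = H_Λ(φ₊) + H_{φ₊^{-1}{0}}(φ₋|_{φ₊^{-1}{0}}), where the second Hamiltonian is taken on the set where φ₊ vanishes (with zero boundary condition), and φ₋ is supported on that set. -/

import Mathlib

/-- Nearest-neighbor adjacency in `ℤ²` (ℓ¹ distance 1). -/
def adj (x y : ℤ × ℤ) : Prop := (x.1 - y.1).natAbs + (x.2 - y.2).natAbs = 1

instance (x y : ℤ × ℤ) : Decidable (adj x y) := by unfold adj; infer_instance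

/-- The four nearest neighbors of a site of `ℤ²`. -/
def nbrs (x : ℤ × ℤ) : Finset (ℤ × ℤ) :=
  {(x.1 + 1, x.2), (x.1 - 1, x.2), (x.1, x.2 + 1), (x.1, x.2 - 1)}

/-- The SOS Hamiltonian with zero boundary condition on a finite `Λ ⊂ ℤ²`:
`H_Λ(φ) = (1/2)∑_{x,y∈Λ, x∼y}|φ(x)−φ(y)| + ∑_{x∈Λ, y∈∂Λ, x∼y}|φ(x)|`. -/
noncomputable def sosH (Λ : Finset (ℤ × ℤ)) (φ : ℤ × ℤ → ℤ) : ℝ :=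
  (1 / 2 : ℝ) * ∑ x ∈ Λ, ∑ y ∈ Λ, (if adj x y then |(φ x : ℝ) - (φ y : ℝ)| else 0)
    + ∑ x ∈ Λ, ∑ y ∈ nbrs x \ Λ, |(φ x : ℝ)|

/-- Extension of a field on `Λ` by zero outside `Λ`. -/
def extLam (Λ : Finset (ℤ × ℤ)) (φ : {x // x ∈ Λ} → ℤ) : ℤ × ℤ → ℤ :=
  fun x => if h : x ∈ Λ then φ ⟨x, h⟩ else 0

/-- The SOS partition function `Z_{Λ,β} = ∑_{φ:Λ→ℤ} exp(−βH_Λ(φ))`. -/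
noncomputable def Zsos (Λ : Finset (ℤ × ℤ)) (β : ℝ) : ℝ :=
  ∑' φ : {x // x ∈ Λ} → ℤ, Real.exp (-β * sosH Λ (extLam Λ φ))

/-- The restricted (positive) SOS partition function
`Z⁺_{Λ,β} = ∑_{φ:Λ→ℤ≥0} exp(−βH_Λ(φ))`. -/
noncomputable def Zplus (Λ : Finset (ℤ × ℤ)) (β : ℝ) : ℝ :=
  ∑' φ : {x // x ∈ Λ} → ℕ, Real.exp (-β * sosH Λ (extLam Λ (fun x => (φ x : ℤ))))

/-- Decomposition of the SOS Hamiltonian into positive and negative parts: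
`H_Λ(φ) = H_Λ(φ₊) + H_{φ₊⁻¹{0}}(φ₋)`, where `φ₊ = max(φ,0)`, `φ₋ = max(−φ,0)` and
`φ₊⁻¹{0} = {x ∈ Λ : φ(x) ≤ 0}`. -/

lemma adj_iff_mem (x y : ℤ × ℤ) : adj x y ↔ y ∈ nbrs x := by
  unfold adj nbrs
  simp [Finset.mem_insert, Prod.ext_iff]
  omega

lemma adj_symm' {x y : ℤ × ℤ} (h : adj x y) : adj y x := by unfold adj at *; omega

lemma habs' (a b : ℤ) : |(a:ℝ) - (b:ℝ)|
    = |((max a 0 : ℤ):ℝ) - ((max b 0 : ℤ):ℝ)| + |((max (-a) 0 : ℤ):ℝ) - ((max (-b) 0 : ℤ):ℝ)| := by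
  have h : |a - b| = |max a 0 - max b 0| + |max (-a) 0 - max (-b) 0| := by
    simp only [Int.abs_eq_natAbs]; omega
  have := congrArg (fun z : ℤ => (z : ℝ)) h
  push_cast at this
  convert this using 2 <;> push_cast <;> ring

lemma sosH_split (Λ : Finset (ℤ × ℤ)) (φ : ℤ × ℤ → ℤ) :
    sosH Λ φ = sosH Λ (fun x => max (φ x) 0) + sosH Λ (fun x => max (-φ x) 0) := by
  unfold sosH
  have hI : ∑ x ∈ Λ, ∑ y ∈ Λ, (if adj x y then |(φ x : ℝ) - (φ y : ℝ)| else 0)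
      = ∑ x ∈ Λ, ∑ y ∈ Λ, (if adj x y then |((max (φ x) 0 : ℤ) : ℝ) - ((max (φ y) 0 : ℤ):ℝ)| else 0)
        + ∑ x ∈ Λ, ∑ y ∈ Λ, (if adj x y then |((max (-φ x) 0 : ℤ) : ℝ) - ((max (-φ y) 0 : ℤ):ℝ)| else 0) := by
    rw [← Finset.sum_add_distrib]
    refine Finset.sum_congr rfl fun x _ => ?_
    rw [← Finset.sum_add_distrib]
    refine Finset.sum_congr rfl fun y _ => ?_
    split
    · exact habs' _ _
    · simp
  have hB : ∑ x ∈ Λ, ∑ y ∈ nbrs x \ Λ, |(φ x : ℝ)|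
      = ∑ x ∈ Λ, ∑ y ∈ nbrs x \ Λ, |((max (φ x) 0 : ℤ) : ℝ)|
        + ∑ x ∈ Λ, ∑ y ∈ nbrs x \ Λ, |((max (-φ x) 0 : ℤ) : ℝ)| := by
    rw [← Finset.sum_add_distrib]
    refine Finset.sum_congr rfl fun x _ => ?_
    rw [← Finset.sum_add_distrib]
    refine Finset.sum_congr rfl fun y _ => ?_
    have := habs' (φ x) 0
    simpa using this
  rw [hI, hB]; ring

lemma sosH_support (Λ : Finset (ℤ × ℤ)) (ψ : ℤ × ℤ → ℤ) (p : ℤ × ℤ → Prop) [DecidablePred p]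
    (h0 : ∀ x, ¬ p x → ψ x = 0) :
    sosH Λ ψ = sosH (Λ.filter p) ψ := by
  classical
  set S := Λ.filter p with hSdef
  set T := Λ.filter (fun x => ¬ p x) with hTdef
  have hTzero : ∀ x ∈ T, ψ x = 0 := fun x hx => h0 x (Finset.mem_filter.mp hx).2
  set g : ℤ × ℤ → ℤ × ℤ → ℝ := fun x y => if adj x y then |(ψ x : ℝ) - (ψ y : ℝ)| else 0 with hg
  have hsplit : ∀ F : ℤ × ℤ → ℝ, ∑ x ∈ Λ, F x = ∑ x ∈ S, F x + ∑ x ∈ T, F x := by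
    intro F; rw [hSdef, hTdef, Finset.sum_filter_add_sum_filter_not]
  have hTT : ∑ x ∈ T, ∑ y ∈ T, g x y = 0 := by
    apply Finset.sum_eq_zero; intro x hx
    apply Finset.sum_eq_zero; intro y hy
    simp [hg, hTzero x hx, hTzero y hy]
  have hST : ∑ x ∈ S, ∑ y ∈ T, g x y
      = ∑ x ∈ S, ∑ y ∈ T, (if adj x y then |(ψ x : ℝ)| else 0) := by
    refine Finset.sum_congr rfl fun x _ => Finset.sum_congr rfl fun y hy => ?_
    simp [hg, hTzero y hy]
  have hTS : ∑ x ∈ T, ∑ y ∈ S, g x y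
      = ∑ x ∈ S, ∑ y ∈ T, (if adj x y then |(ψ x : ℝ)| else 0) := by
    rw [Finset.sum_comm]
    refine Finset.sum_congr rfl fun x _ => Finset.sum_congr rfl fun y hy => ?_
    have : adj y x ↔ adj x y := ⟨adj_symm', adj_symm'⟩
    simp [hg, hTzero y hy, this, abs_sub_comm]
  have hint : ∑ x ∈ Λ, ∑ y ∈ Λ, g x y
      = ∑ x ∈ S, ∑ y ∈ S, g x y
        + 2 * ∑ x ∈ S, ∑ y ∈ T, (if adj x y then |(ψ x : ℝ)| else 0) := by
    rw [hsplit]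
    have h1 : ∀ x, ∑ y ∈ Λ, g x y = ∑ y ∈ S, g x y + ∑ y ∈ T, g x y := fun x => hsplit _
    simp only [h1, Finset.sum_add_distrib]
    rw [hTT, hST, hTS]; ring
  have hbd : ∑ x ∈ Λ, ∑ y ∈ nbrs x \ Λ, |(ψ x : ℝ)|
      = ∑ x ∈ S, ∑ y ∈ nbrs x \ Λ, |(ψ x : ℝ)| := by
    rw [hsplit]
    have : ∑ x ∈ T, ∑ y ∈ nbrs x \ Λ, |(ψ x : ℝ)| = 0 := by
      apply Finset.sum_eq_zero; intro x hx
      apply Finset.sum_eq_zero; intro y _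
      simp [hTzero x hx]
    rw [this, add_zero]
  have hper : ∀ x ∈ S, ∑ y ∈ nbrs x \ S, |(ψ x : ℝ)|
      = ∑ y ∈ nbrs x \ Λ, |(ψ x : ℝ)| + ∑ y ∈ T, (if adj x y then |(ψ x : ℝ)| else 0) := by
    intro x _
    have hsum : ∑ y ∈ T, (if adj x y then |(ψ x : ℝ)| else 0)
        = ∑ y ∈ T.filter (fun y => adj x y), |(ψ x : ℝ)| :=
      (Finset.sum_filter _ _).symm
    rw [hsum]
    have hunion : nbrs x \ S = (nbrs x \ Λ) ∪ T.filter (fun y => adj x y) := by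
      ext y
      have := adj_iff_mem x y
      simp only [Finset.mem_sdiff, Finset.mem_union, Finset.mem_filter, hSdef, hTdef]
      tauto
    have hdisj : Disjoint (nbrs x \ Λ) (T.filter (fun y => adj x y)) := by
      rw [Finset.disjoint_left]
      intro y hy hy'
      exact (Finset.mem_sdiff.mp hy).2 (Finset.mem_filter.mp (Finset.mem_filter.mp hy').1).1
    rw [hunion, Finset.sum_union hdisj]
  unfold sosH
  rw [hint, hbd]
  rw [Finset.sum_congr rfl hper, Finset.sum_add_distrib]
  ring

theorem stmt19 (Λ : Finset (ℤ × ℤ)) (φ : ℤ × ℤ → ℤ) :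
    sosH Λ φ
      = sosH Λ (fun x => max (φ x) 0)
        + sosH (Λ.filter (fun x => φ x ≤ 0)) (fun x => max (-φ x) 0) := by
  rw [sosH_split Λ φ]
  congr 1
  exact sosH_support Λ (fun x => max (-φ x) 0) (fun x => φ x ≤ 0)
    (fun x hx => by show max (-φ x) 0 = 0; simp only [not_le] at hx; omega)
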